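/- Let X be a real symmetric n×n matrix such that vᵀ X v ≥ 0 for every v ∈ V_n, and suppose Tr(X) = 1. Then Σ_{i,j} X_{ij} ≤ n. (Consequently the first LP in the outer-approximation sequence for the Lovász theta number, which maximizes J·X subject to Tr(X)=1 and X ∈ DD*_n, is bounded above.) -/

import Mathlib

open scoped Matrix

/-- `v` belongs to `V_n`: `v` is a nonzero vector in `ℝⁿ` with at most 2 nonzero
components, each equal to `+1` or `-1`. -/
def MemVn {n : ℕ} (v : Fin n → ℝ) : Prop :=
  v ≠ 0 ∧ (∀ i, v i = 0 ∨ v i = 1 ∨ v i = -1) ∧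
    ∃ i j : Fin n, ∀ k, k ≠ i → k ≠ j → v k = 0

lemma key {n : ℕ} (X : Matrix (Fin n) (Fin n) ℝ) (hX : X.IsSymm)
    (hdual : ∀ v : Fin n → ℝ, MemVn v → 0 ≤ dotProduct v (X.mulVec v))
    (i j : Fin n) : X i j ≤ (X i i + X j j) / 2 := by
  rcases eq_or_ne i j with rfl | hij
  · linarith
  · set v : Fin n → ℝ := fun k => (if k = i then (1:ℝ) else 0) - (if k = j then 1 else 0) with hv
    have hmem : MemVn v := by
      refine ⟨?_, ?_, i, j, ?_⟩
      · intro h0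
        have : v i = 0 := by rw [h0]; rfl
        simp [hv, hij] at this
      · intro k
        by_cases hk : k = i
        · subst hk; right; left; simp [hv, hij]
        · by_cases hk' : k = j
          · subst hk'; right; right; simp [hv, hk]
          · left; simp [hv, hk, hk']
      · intro k hki hkj
        simp [hv, hki, hkj]
    have h := hdual v hmem
    have hsym : X j i = X i j := by
      have := congrFun (congrFun hX i) j
      simpa [Matrix.transpose_apply] using this
    have hquad : dotProduct v (X.mulVec v)
        = X i i - X i j - X j i + X j j := by
      simp only [dotProduct, Matrix.mulVec, dotProduct, hv,
        sub_mul, mul_sub, ite_mul, mul_ite, one_mul, mul_one, zero_mul, mul_zero,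
        Finset.sum_sub_distrib, Finset.sum_ite_eq', Finset.mem_univ, if_true]
      ring
    rw [hquad] at h
    linarith

/-- If `X` is real symmetric with `vᵀ X v ≥ 0` for every `v ∈ V_n` and `Tr(X) = 1`,
then `J · X = ∑_{i,j} X_{ij} ≤ n`; hence the first LP in the outer-approximation
sequence for the Lovász theta number is bounded above. -/
theorem lovasz_outer_lp_bounded {n : ℕ} (X : Matrix (Fin n) (Fin n) ℝ) (hX : X.IsSymm)
    (hdual : ∀ v : Fin n → ℝ, MemVn v → 0 ≤ dotProduct v (X.mulVec v))
    (htrace : X.trace = 1) :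
    ∑ i, ∑ j, X i j ≤ (n : ℝ) := by
  have htr : ∑ i, X i i = 1 := by
    simpa [Matrix.trace, Matrix.diag] using htrace
  calc ∑ i, ∑ j, X i j ≤ ∑ i, ∑ j, (X i i + X j j) / 2 := by
        apply Finset.sum_le_sum; intro i _
        exact Finset.sum_le_sum fun j _ => key X hX hdual i j
    _ = (n : ℝ) := by
        have inner : ∀ i, ∑ j : Fin n, (X i i + X j j) / 2 = ((n : ℝ) * X i i + 1) / 2 := by
          intro i
          rw [← Finset.sum_div, Finset.sum_add_distrib, Finset.sum_const, htr]
          simp [nsmul_eq_mul]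
        rw [Finset.sum_congr rfl fun i _ => inner i, ← Finset.sum_div,
          Finset.sum_add_distrib, ← Finset.mul_sum, htr, Finset.sum_const]
        simp
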